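/- Let F : X → Y be a shape morphism of topological spaces which has a right inverse, i.e., there is a shape morphism G : Y → X with F ∘ G = 1_Y. If sd F ≤ n, then sd Y ≤ n. -/

import Mathlib

universe u

noncomputable section

namespace ShapePaper

open CategoryTheory

/-! ### H-maps: morphisms of the homotopy category HTop -/

/-- The setoid of continuous maps up to homotopy. -/
def homotopySetoid (X Y : Type u) [TopologicalSpace X] [TopologicalSpace Y] :
    Setoid C(X, Y) :=
  ⟨ContinuousMap.Homotopic, ContinuousMap.Homotopic.equivalence⟩

/-- An H-map `X → Y` is a homotopy class of continuous maps `X → Y`,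
i.e. a morphism of the homotopy category `HTop`. -/
def HMap (X Y : Type u) [TopologicalSpace X] [TopologicalSpace Y] : Type u :=
  Quotient (homotopySetoid X Y)

variable {X Y Z W : Type u} [TopologicalSpace X] [TopologicalSpace Y]
  [TopologicalSpace Z] [TopologicalSpace W]

/-- The H-map (homotopy class) of a continuous map. -/
def HMap.mk (f : C(X, Y)) : HMap X Y := Quotient.mk (homotopySetoid X Y) f

/-- The identity H-map. -/
protected def HMap.id (X : Type u) [TopologicalSpace X] : HMap X X :=
  HMap.mk (ContinuousMap.id X)

/-- Composition of H-maps. -/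
protected def HMap.comp (g : HMap Y Z) (f : HMap X Y) : HMap X Z :=
  Quotient.liftOn₂ g f (fun g f => HMap.mk (g.comp f))
    (fun _ _ _ _ hg hf => Quotient.sound (ContinuousMap.Homotopic.comp hg hf))

theorem HMap.comp_assoc (h : HMap Z W) (g : HMap Y Z) (f : HMap X Y) :
    HMap.comp (HMap.comp h g) f = HMap.comp h (HMap.comp g f) := by
  induction h using Quotient.inductionOn
  induction g using Quotient.inductionOn
  induction f using Quotient.inductionOn
  rfl

theorem HMap.id_comp (f : HMap X Y) : HMap.comp (HMap.id Y) f = f := by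
  induction f using Quotient.inductionOn
  rfl

theorem HMap.comp_id (f : HMap X Y) : HMap.comp f (HMap.id X) = f := by
  induction f using Quotient.inductionOn
  rfl

/-! ### Polyhedra and the category HPol -/

/-- A realization of the space `P` as (the space of) a simplicial complex. -/
structure PolyhedralRealization (P : Type u) [TopologicalSpace P] where
  /-- the ambient topological real vector space -/
  E : Type u
  [addCommGroup : AddCommGroup E]
  [module : Module ℝ E]
  [topE : TopologicalSpace E]
  /-- the simplicial complex -/
  complex : Geometry.SimplicialComplex ℝ E
  /-- `P` is homeomorphic to the space (carrier) of the complex -/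
  homeo : P ≃ₜ complex.space

attribute [instance] PolyhedralRealization.addCommGroup PolyhedralRealization.module
  PolyhedralRealization.topE

/-- The realization has dimension `≤ n`: every simplex has at most `n + 1` vertices. -/
def PolyhedralRealization.DimLE {P : Type u} [TopologicalSpace P]
    (R : PolyhedralRealization P) (n : ℕ) : Prop :=
  ∀ s ∈ R.complex.faces, s.card ≤ n + 1

/-- `P` is a polyhedron. -/
def IsPolyhedron (P : Type u) [TopologicalSpace P] : Prop :=
  Nonempty (PolyhedralRealization P)

/-- `P` is a polyhedron of dimension `≤ n`. -/
def IsPolyhedronDimLE (P : Type u) [TopologicalSpace P] (n : ℕ) : Prop :=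
  ∃ R : PolyhedralRealization P, R.DimLE n

/-- `X` is an object of `HPol`, i.e. has the homotopy type of a polyhedron. -/
def InHPol (X : Type u) [TopologicalSpace X] : Prop :=
  ∃ (P : Type u) (_ : TopologicalSpace P), IsPolyhedron P ∧
    Nonempty (ContinuousMap.HomotopyEquiv X P)

/-- The H-map `f` factors in `HPol` through some polyhedron of dimension `≤ n`. -/
def HMap.FactorsThruPolyhedronDimLE (f : HMap X Y) (n : ℕ) : Prop :=
  ∃ (P : Type u) (_ : TopologicalSpace P), IsPolyhedronDimLE P n ∧
    ∃ (u : HMap X P) (v : HMap P Y), f = v.comp u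

/-- `X` is homotopy dominated by a polyhedron of dimension `≤ n`. -/
def DominatedByPolyhedronDimLE (X : Type u) [TopologicalSpace X] (n : ℕ) : Prop :=
  ∃ (P : Type u) (_ : TopologicalSpace P), IsPolyhedronDimLE P n ∧
    ∃ (s : HMap X P) (d : HMap P X), d.comp s = HMap.id X

/-! ### Inverse systems in HPol -/

/-- An inverse system in the category `HPol`: a directed index set `Idx`, spaces `obj i`
having the homotopy type of polyhedra, and bonding H-maps. -/
structure InverseSystem : Type (u + 1) where
  /-- the index set -/
  Idx : Type u
  [preorder : Preorder Idx]
  [idxNonempty : Nonempty Idx]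
  directed : ∀ a b : Idx, ∃ c, a ≤ c ∧ b ≤ c
  /-- the terms of the system -/
  obj : Idx → Type u
  [topObj : ∀ i, TopologicalSpace (obj i)]
  inHPol : ∀ i, InHPol (obj i)
  /-- the bonding H-maps -/
  bond : ∀ {i j : Idx}, i ≤ j → HMap (obj j) (obj i)
  bond_refl : ∀ i : Idx, bond (le_refl i) = HMap.id (obj i)
  bond_trans : ∀ {i j k : Idx} (hij : i ≤ j) (hjk : j ≤ k),
    HMap.comp (bond hij) (bond hjk) = bond (hij.trans hjk)

attribute [instance] InverseSystem.preorder InverseSystem.idxNonempty InverseSystem.topObj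

/-- A morphism of inverse systems in `HPol`. -/
structure SysMor (𝓧 𝓨 : InverseSystem.{u}) : Type u where
  /-- the index function `φ` -/
  idxMap : 𝓨.Idx → 𝓧.Idx
  /-- the H-maps `f_μ : X_{φ(μ)} → Y_μ` -/
  hmap : ∀ μ : 𝓨.Idx, HMap (𝓧.obj (idxMap μ)) (𝓨.obj μ)
  coherent : ∀ {μ μ' : 𝓨.Idx} (h : μ ≤ μ'),
    ∃ (l : 𝓧.Idx) (h₁ : idxMap μ ≤ l) (h₂ : idxMap μ' ≤ l),
      (𝓨.bond h).comp ((hmap μ').comp (𝓧.bond h₂)) = (hmap μ).comp (𝓧.bond h₁)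

variable {𝓧 𝓨 𝓩 : InverseSystem.{u}}

/-- `f_{μλ} := f_μ ∘ p_{φ(μ)λ}` for `λ ≥ φ(μ)`. -/
def SysMor.shift (F : SysMor 𝓧 𝓨) (μ : 𝓨.Idx) {l : 𝓧.Idx} (h : F.idxMap μ ≤ l) :
    HMap (𝓧.obj l) (𝓨.obj μ) :=
  (F.hmap μ).comp (𝓧.bond h)

theorem SysMor.shift_comp (F : SysMor 𝓧 𝓨) (μ : 𝓨.Idx) {l l' : 𝓧.Idx}
    (h : F.idxMap μ ≤ l) (h' : l ≤ l') :
    (F.shift μ h).comp (𝓧.bond h') = F.shift μ (h.trans h') := by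
  rw [SysMor.shift, SysMor.shift, HMap.comp_assoc, 𝓧.bond_trans]

/-- Coherence, pushed up to all larger indices. -/
theorem SysMor.coherent' (F : SysMor 𝓧 𝓨) {μ μ' : 𝓨.Idx} (h : μ ≤ μ') :
    ∃ (l : 𝓧.Idx) (h₁ : F.idxMap μ ≤ l) (h₂ : F.idxMap μ' ≤ l),
      ∀ {l' : 𝓧.Idx} (hl : l ≤ l'),
        (𝓨.bond h).comp ((F.hmap μ').comp (𝓧.bond (h₂.trans hl))) =
          (F.hmap μ).comp (𝓧.bond (h₁.trans hl)) := by
  obtain ⟨l, h₁, h₂, heq⟩ := F.coherent h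
  refine ⟨l, h₁, h₂, ?_⟩
  intro l' hl
  have := congrArg (fun t => HMap.comp t (𝓧.bond hl)) heq
  simpa only [HMap.comp_assoc, InverseSystem.bond_trans] using this

/-- The dimension of a morphism of inverse systems is `≤ n`. -/
def SysMor.DimLE (F : SysMor 𝓧 𝓨) (n : ℕ) : Prop :=
  ∀ μ : 𝓨.Idx, ∃ (l : 𝓧.Idx) (h : F.idxMap μ ≤ l),
    (F.shift μ h).FactorsThruPolyhedronDimLE n

/-- The dimension of an inverse system is `≤ n` : every term is homotopy dominated by
a polyhedron of dimension `≤ n`. -/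
def InverseSystem.DimLE (𝓧 : InverseSystem.{u}) (n : ℕ) : Prop :=
  ∀ i : 𝓧.Idx, DominatedByPolyhedronDimLE (𝓧.obj i) n

/-- Equivalence of morphisms of inverse systems. -/
def SysMor.Equiv (F G : SysMor 𝓧 𝓨) : Prop :=
  ∀ μ : 𝓨.Idx, ∃ (l : 𝓧.Idx) (h₁ : F.idxMap μ ≤ l) (h₂ : G.idxMap μ ≤ l),
    F.shift μ h₁ = G.shift μ h₂

/-- A pro-morphism (morphism of pro-HPol) is an equivalence class of morphisms
of inverse systems. -/
def ProMor (𝓧 𝓨 : InverseSystem.{u}) : Type u :=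
  Quot (@SysMor.Equiv 𝓧 𝓨)

/-- The pro-morphism represented by a morphism of inverse systems. -/
def ProMor.mk (F : SysMor 𝓧 𝓨) : ProMor 𝓧 𝓨 := Quot.mk _ F

/-- The dimension of a pro-morphism is `≤ n` if it admits a representative of
dimension `≤ n`. -/
def ProMor.DimLE (f : ProMor 𝓧 𝓨) (n : ℕ) : Prop :=
  ∃ F : SysMor 𝓧 𝓨, ProMor.mk F = f ∧ F.DimLE n

/-- The identity morphism of an inverse system. -/
def SysMor.identity (𝓧 : InverseSystem.{u}) : SysMor 𝓧 𝓧 where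
  idxMap := id
  hmap i := HMap.id (𝓧.obj i)
  coherent := by
    intro μ μ' h
    refine ⟨μ', h, le_refl _, ?_⟩
    show (𝓧.bond h).comp ((HMap.id _).comp (𝓧.bond (le_refl μ'))) =
      (HMap.id _).comp (𝓧.bond h)
    rw [HMap.id_comp, HMap.id_comp, 𝓧.bond_trans]

/-- Composition of morphisms of inverse systems. -/
def SysMor.comp (G : SysMor 𝓨 𝓩) (F : SysMor 𝓧 𝓨) : SysMor 𝓧 𝓩 where
  idxMap := F.idxMap ∘ G.idxMap
  hmap ν := (G.hmap ν).comp (F.hmap (G.idxMap ν))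
  coherent := by
    intro ν ν' h
    obtain ⟨μ, hμ₁, hμ₂, hg⟩ := G.coherent h
    obtain ⟨l₁, h₁₁, h₁₂, hf₁⟩ := F.coherent' hμ₁
    obtain ⟨l₂, h₂₁, h₂₂, hf₂⟩ := F.coherent' hμ₂
    obtain ⟨l, hl₁, hl₂⟩ := 𝓧.directed l₁ l₂
    refine ⟨l, h₁₁.trans hl₁, h₂₁.trans hl₂, ?_⟩
    have e₁ := hf₁ hl₁
    have e₂ := hf₂ hl₂
    have hg₂ := congrArg
      (fun t => HMap.comp t ((F.hmap μ).comp (𝓧.bond (h₂₂.trans hl₂)))) hg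
    simp only [HMap.comp_assoc] at hg₂ e₁ e₂ ⊢
    rw [← e₂, hg₂, ← e₁]

/-- Composition of pro-morphisms (via choice of representatives). -/
def ProMor.comp (g : ProMor 𝓨 𝓩) (f : ProMor 𝓧 𝓨) : ProMor 𝓧 𝓩 :=
  ProMor.mk ((Quot.out g).comp (Quot.out f))

/-- The identity pro-morphism. -/
protected def ProMor.id (𝓧 : InverseSystem.{u}) : ProMor 𝓧 𝓧 :=
  ProMor.mk (SysMor.identity 𝓧)

/-- `α` is an isomorphism of pro-HPol. -/
def ProMor.IsIso (α : ProMor 𝓧 𝓨) : Prop :=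
  ∃ β : ProMor 𝓨 𝓧, β.comp α = ProMor.id 𝓧 ∧ α.comp β = ProMor.id 𝓨

/-! ### Restriction to a cofinal subset -/

/-- The subsystem of `𝓨` determined by a cofinal subset `S` of the index set. -/
def InverseSystem.restrict (𝓨 : InverseSystem.{u}) (S : Set 𝓨.Idx)
    (hcof : ∀ μ : 𝓨.Idx, ∃ μ' ∈ S, μ ≤ μ') : InverseSystem.{u} where
  Idx := ↥S
  idxNonempty := by
    obtain ⟨μ⟩ := 𝓨.idxNonempty
    obtain ⟨μ', hs, -⟩ := hcof μ
    exact ⟨⟨μ', hs⟩⟩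
  directed a b := by
    obtain ⟨c, hac, hbc⟩ := 𝓨.directed a b
    obtain ⟨c', hs, hcc'⟩ := hcof c
    exact ⟨⟨c', hs⟩, Subtype.coe_le_coe.mp (le_trans hac hcc'),
      Subtype.coe_le_coe.mp (le_trans hbc hcc')⟩
  obj i := 𝓨.obj i
  topObj i := 𝓨.topObj i
  inHPol i := 𝓨.inHPol i
  bond h := 𝓨.bond h
  bond_refl i := 𝓨.bond_refl i
  bond_trans h₁ h₂ := 𝓨.bond_trans h₁ h₂

/-- The morphism induced by `F : 𝓧 → 𝓨` and the inclusion of a cofinal subset of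
the index set of `𝓨`. -/
def SysMor.restrict (F : SysMor 𝓧 𝓨) (S : Set 𝓨.Idx)
    (hcof : ∀ μ : 𝓨.Idx, ∃ μ' ∈ S, μ ≤ μ') : SysMor 𝓧 (𝓨.restrict S hcof) where
  idxMap μ := F.idxMap μ.val
  hmap μ := F.hmap μ.val
  coherent := by
    intro μ μ' h
    exact F.coherent h

/-! ### Expansions and shape dimension -/

/-- An `HPol`-expansion of the topological space `X`. -/
structure Expansion (X : Type u) [TopologicalSpace X] (𝓧 : InverseSystem.{u}) where
  /-- the projection H-maps `p_λ : X → X_λ` -/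
  proj : ∀ l : 𝓧.Idx, HMap X (𝓧.obj l)
  proj_bond : ∀ {l l' : 𝓧.Idx} (h : l ≤ l'), (𝓧.bond h).comp (proj l') = proj l
  /-- every H-map into a space of `HPol` factors through some term of the system -/
  factors : ∀ (P : Type u) [TopologicalSpace P], InHPol P → ∀ f : HMap X P,
    ∃ (l : 𝓧.Idx) (g : HMap (𝓧.obj l) P), g.comp (proj l) = f
  /-- the factorization is unique after passing to a larger index -/
  factors_unique : ∀ (P : Type u) [TopologicalSpace P], InHPol P →
    ∀ (l : 𝓧.Idx) (g g' : HMap (𝓧.obj l) P), g.comp (proj l) = g'.comp (proj l) →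
      ∃ (l' : 𝓧.Idx) (h : l ≤ l'), g.comp (𝓧.bond h) = g'.comp (𝓧.bond h)

/-- The shape dimension of a topological space is `≤ n`: `X` admits an
`HPol`-expansion all of whose terms are homotopy dominated by polyhedra of
dimension `≤ n`. -/
def ShapeDimLE (X : Type u) [TopologicalSpace X] (n : ℕ) : Prop :=
  ∃ (𝓧 : InverseSystem.{u}) (_ : Expansion X 𝓧), 𝓧.DimLE n

/-- The morphism of inverse systems `F` represents the H-map `f` with respect to the
expansions `pX` and `pY`, i.e. `q_μ ∘ f = f_μ ∘ p_{φ(μ)}` for all `μ`. -/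
def Represents {X Y : Type u} [TopologicalSpace X] [TopologicalSpace Y]
    {𝓧 𝓨 : InverseSystem.{u}} (pX : Expansion X 𝓧) (pY : Expansion Y 𝓨)
    (f : HMap X Y) (F : SysMor 𝓧 𝓨) : Prop :=
  ∀ μ : 𝓨.Idx, (F.hmap μ).comp (pX.proj (F.idxMap μ)) = (pY.proj μ).comp f

/-- The shape dimension of an H-map `f : X → Y` is `≤ n`: the shape morphism
induced by `f` admits a representation by a pro-morphism of dimension `≤ n`. -/
def HMapShapeDimLE {X Y : Type u} [TopologicalSpace X] [TopologicalSpace Y]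
    (f : HMap X Y) (n : ℕ) : Prop :=
  ∃ (𝓧 𝓨 : InverseSystem.{u}) (pX : Expansion X 𝓧) (pY : Expansion Y 𝓨)
    (F : SysMor 𝓧 𝓨), Represents pX pY f F ∧ (ProMor.mk F).DimLE n

/-- The shape dimension of a space, as an extended natural number. -/
def shapeDim (X : Type u) [TopologicalSpace X] : ℕ∞ :=
  sInf {n : ℕ∞ | ∃ m : ℕ, n = (m : ℕ∞) ∧ ShapeDimLE X m}

/-- The shape dimension of an H-map, as an extended natural number. -/
def hmapShapeDim {X Y : Type u} [TopologicalSpace X] [TopologicalSpace Y]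
    (f : HMap X Y) : ℕ∞ :=
  sInf {n : ℕ∞ | ∃ m : ℕ, n = (m : ℕ∞) ∧ HMapShapeDimLE f m}

end ShapePaper

namespace ShapePaper

/-! ### Auxiliary lemmas: `SysMor.Equiv` is an equivalence relation -/

variable {𝓧 𝓨 : InverseSystem.{u}}

theorem SysMor.equiv_refl (F : SysMor 𝓧 𝓨) : F.Equiv F :=
  fun μ => ⟨F.idxMap μ, le_refl _, le_refl _, rfl⟩

theorem SysMor.equiv_symm {F G : SysMor 𝓧 𝓨} (h : F.Equiv G) : G.Equiv F := by
  intro μ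
  obtain ⟨l, h₁, h₂, he⟩ := h μ
  exact ⟨l, h₂, h₁, he.symm⟩

theorem SysMor.equiv_trans {F G H : SysMor 𝓧 𝓨} (hfg : F.Equiv G) (hgh : G.Equiv H) :
    F.Equiv H := by
  intro μ
  obtain ⟨l₁, a₁, b₁, e₁⟩ := hfg μ
  obtain ⟨l₂, a₂, b₂, e₂⟩ := hgh μ
  obtain ⟨l, hl₁, hl₂⟩ := 𝓧.directed l₁ l₂
  refine ⟨l, a₁.trans hl₁, b₂.trans hl₂, ?_⟩
  calc F.shift μ (a₁.trans hl₁)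
      = (F.shift μ a₁).comp (𝓧.bond hl₁) := (F.shift_comp μ a₁ hl₁).symm
    _ = (G.shift μ b₁).comp (𝓧.bond hl₁) := by rw [e₁]
    _ = G.shift μ (b₁.trans hl₁) := G.shift_comp μ b₁ hl₁
    _ = (G.shift μ a₂).comp (𝓧.bond hl₂) := (G.shift_comp μ a₂ hl₂).symm
    _ = (H.shift μ b₂).comp (𝓧.bond hl₂) := by rw [e₂]
    _ = H.shift μ (b₂.trans hl₂) := H.shift_comp μ b₂ hl₂

theorem SysMor.equiv_equivalence : Equivalence (@SysMor.Equiv 𝓧 𝓨) :=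
  ⟨SysMor.equiv_refl, SysMor.equiv_symm, SysMor.equiv_trans⟩

theorem SysMor.equiv_of_mk_eq {F G : SysMor 𝓧 𝓨} (h : ProMor.mk F = ProMor.mk G) :
    F.Equiv G :=
  (Equivalence.eqvGen_iff SysMor.equiv_equivalence).mp (Quot.eqvGen_exact h)

/-- Equivalent system morphisms have equal shifts at *all* sufficiently large indices. -/
theorem SysMor.Equiv.shift_eq {F G : SysMor 𝓧 𝓨} (h : F.Equiv G) (μ : 𝓨.Idx) :
    ∃ (l : 𝓧.Idx) (h₁ : F.idxMap μ ≤ l) (h₂ : G.idxMap μ ≤ l), ∀ {l'} (hl : l ≤ l'),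
      F.shift μ (h₁.trans hl) = G.shift μ (h₂.trans hl) := by
  obtain ⟨l, h₁, h₂, he⟩ := h μ
  exact ⟨l, h₁, h₂, fun {l'} hl => by
    rw [← SysMor.shift_comp _ _ h₁ hl, ← SysMor.shift_comp _ _ h₂ hl, he]⟩

/-! ### Factorizations of bonds through polyhedra of dimension `≤ n` -/

/-- The data of a factorization, through a polyhedron of dimension `≤ n`, of a bonding
map of `𝓨` from some larger index `top` down to `μ`. -/
structure BondFactor (𝓨 : InverseSystem.{u}) (n : ℕ) (μ : 𝓨.Idx) : Type (u + 1) where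
  top : 𝓨.Idx
  le : μ ≤ top
  P : Type u
  [tp : TopologicalSpace P]
  dimLE : IsPolyhedronDimLE P n
  w : HMap (𝓨.obj top) P
  v : HMap P (𝓨.obj μ)
  fact : v.comp w = 𝓨.bond le

attribute [instance] BondFactor.tp

variable {n : ℕ}

/-- The order on the index set of the telescope system. -/
def telLE (D : ∀ μ : 𝓨.Idx, BondFactor 𝓨 n μ) (a b : 𝓨.Idx × ℕ) : Prop :=
  a = b ∨ ((D a.1).top ≤ b.1 ∧ a.2 < b.2)

def telPreorder (D : ∀ μ : 𝓨.Idx, BondFactor 𝓨 n μ) : Preorder (𝓨.Idx × ℕ) where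
  le := telLE D
  le_refl a := Or.inl rfl
  lt a b := telLE D a b ∧ ¬ telLE D b a
  lt_iff_le_not_ge _ _ := Iff.rfl
  le_trans a b c h₁ h₂ := by
    rcases h₁ with rfl | ⟨h₁, hk₁⟩
    · exact h₂
    rcases h₂ with rfl | ⟨h₂, hk₂⟩
    · exact Or.inr ⟨h₁, hk₁⟩
    · exact Or.inr ⟨h₁.trans ((D b.1).le.trans h₂), hk₁.trans hk₂⟩

open scoped Classical in
/-- The bonding maps of the telescope system. -/
noncomputable def telBond (D : ∀ μ : 𝓨.Idx, BondFactor 𝓨 n μ) {a b : 𝓨.Idx × ℕ}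
    (h : telLE D a b) : HMap (D b.1).P (D a.1).P :=
  if he : a = b then
    cast (congrArg (fun x => HMap (D x.1).P (D a.1).P) he) (HMap.id (D a.1).P)
  else ((D a.1).w.comp (𝓨.bond (h.resolve_left he).1)).comp (D b.1).v

theorem telBond_self (D : ∀ μ : 𝓨.Idx, BondFactor 𝓨 n μ) {a : 𝓨.Idx × ℕ}
    (h : telLE D a a) : telBond D h = HMap.id (D a.1).P := by
  rw [telBond, dif_pos rfl]
  exact cast_eq _ _

theorem telBond_ne (D : ∀ μ : 𝓨.Idx, BondFactor 𝓨 n μ) {a b : 𝓨.Idx × ℕ}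
    (h : telLE D a b) (he : a ≠ b) :
    telBond D h = ((D a.1).w.comp (𝓨.bond (h.resolve_left he).1)).comp (D b.1).v := by
  rw [telBond, dif_neg he]

theorem telBond_trans (D : ∀ μ : 𝓨.Idx, BondFactor 𝓨 n μ) {a b c : 𝓨.Idx × ℕ}
    (h₁ : telLE D a b) (h₂ : telLE D b c) (h₃ : telLE D a c) :
    HMap.comp (telBond D h₁) (telBond D h₂) = telBond D h₃ := by
  by_cases he₁ : a = b
  · subst he₁
    rw [telBond_self D h₁, HMap.id_comp]
  by_cases he₂ : b = c
  · subst he₂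
    rw [telBond_self D h₂, HMap.comp_id]
  obtain ⟨hb₁, hk₁⟩ := h₁.resolve_left he₁
  obtain ⟨hb₂, hk₂⟩ := h₂.resolve_left he₂
  have he₃ : a ≠ c := fun h => absurd (h ▸ (hk₁.trans hk₂)) (lt_irrefl _)
  rw [telBond_ne D h₁ he₁, telBond_ne D h₂ he₂, telBond_ne D h₃ he₃]
  simp only [HMap.comp_assoc]
  rw [← HMap.comp_assoc (D b.1).v (D b.1).w, (D b.1).fact,
    ← HMap.comp_assoc (𝓨.bond _) (𝓨.bond _), 𝓨.bond_trans,
    ← HMap.comp_assoc (𝓨.bond _) (𝓨.bond _), 𝓨.bond_trans]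

/-- The telescope system: its terms are the polyhedra through which bonds of `𝓨`
factor. -/
noncomputable def telSystem (D : ∀ μ : 𝓨.Idx, BondFactor 𝓨 n μ) : InverseSystem.{u} where
  Idx := 𝓨.Idx × ℕ
  preorder := telPreorder D
  idxNonempty := ⟨(Classical.arbitrary _, 0)⟩
  directed a b := by
    obtain ⟨ρ, hρ₁, hρ₂⟩ := 𝓨.directed (D a.1).top (D b.1).top
    exact ⟨(ρ, max a.2 b.2 + 1),
      Or.inr ⟨hρ₁, Nat.lt_succ_of_le (le_max_left _ _)⟩,
      Or.inr ⟨hρ₂, Nat.lt_succ_of_le (le_max_right _ _)⟩⟩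
  obj a := (D a.1).P
  topObj a := (D a.1).tp
  inHPol a := by
    obtain ⟨R, -⟩ := (D a.1).dimLE
    exact ⟨(D a.1).P, (D a.1).tp, ⟨R⟩, ⟨ContinuousMap.HomotopyEquiv.refl _⟩⟩
  bond h := telBond D h
  bond_refl a := telBond_self D _
  bond_trans h₁ h₂ := telBond_trans D h₁ h₂ _

theorem telSystem_dimLE (D : ∀ μ : 𝓨.Idx, BondFactor 𝓨 n μ) :
    (telSystem D).DimLE n := by
  intro a
  exact ⟨(D a.1).P, (D a.1).tp, (D a.1).dimLE,
    HMap.id _, HMap.id _, HMap.id_comp _⟩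

/-- The telescope system is an expansion of `Y` whenever `𝓨` is. -/
noncomputable def telExpansion {Y : Type u} [TopologicalSpace Y]
    (pY : Expansion Y 𝓨) (D : ∀ μ : 𝓨.Idx, BondFactor 𝓨 n μ) :
    Expansion Y (telSystem D) where
  proj a := (D a.1).w.comp (pY.proj (D a.1).top)
  proj_bond {a b} h := by
    by_cases he : a = b
    · subst he
      show HMap.comp (telBond D h) _ = _
      rw [telBond_self D h, HMap.id_comp]
    · show HMap.comp (telBond D h) _ = _
      rw [telBond_ne D h he]
      simp only [HMap.comp_assoc]
      rw [← HMap.comp_assoc (D b.1).v (D b.1).w, (D b.1).fact, pY.proj_bond,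
        pY.proj_bond]
  factors P _ hP f := by
    obtain ⟨μ, g, hg⟩ := pY.factors P hP f
    refine ⟨(μ, 0), (g.comp (D μ).v : HMap (D μ).P P), ?_⟩
    show (g.comp (D μ).v).comp ((D μ).w.comp (pY.proj (D μ).top)) = f
    rw [HMap.comp_assoc, ← HMap.comp_assoc (D μ).v (D μ).w, (D μ).fact,
      pY.proj_bond, hg]
  factors_unique P _ hP a g g' hgg' := by
    have h' : (g.comp (D a.1).w).comp (pY.proj (D a.1).top)
        = (g'.comp (D a.1).w).comp (pY.proj (D a.1).top) := by
      exact (HMap.comp_assoc _ _ _).trans (hgg'.trans (HMap.comp_assoc _ _ _).symm)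
    obtain ⟨ρ, hρ, heq⟩ := pY.factors_unique P hP (D a.1).top
      (g.comp (D a.1).w) (g'.comp (D a.1).w) h'
    have hab : telLE D a (ρ, a.2 + 1) := Or.inr ⟨hρ, Nat.lt_succ_self _⟩
    have hne : a ≠ (ρ, a.2 + 1) := fun h =>
      absurd (congrArg Prod.snd h) (Nat.ne_of_lt (Nat.lt_succ_self _))
    refine ⟨(ρ, a.2 + 1), hab, ?_⟩
    show g.comp (telBond D hab) = g'.comp (telBond D hab)
    rw [telBond_ne D hab hne]
    simp only [← HMap.comp_assoc]
    exact (HMap.comp_assoc g _ _).symm.trans ((congrArg (fun t => HMap.comp t _) (HMap.comp_assoc g _ _).symm).trans ((congrArg (fun t => HMap.comp t (D (ρ, a.2 + 1).1).v) heq).trans ((congrArg (fun t => HMap.comp t _) (HMap.comp_assoc g' _ _)).trans (HMap.comp_assoc g' _ _))))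

/-- **Theorem 2.19.** Let `F : X → Y` be a shape morphism of topological spaces (given,
with respect to HPol-expansions of `X` and `Y`, by a morphism of inverse systems `F`)
which has a right inverse `G : Y → X`, i.e. `F ∘ G = 1_Y`.  If `sd F ≤ n` then
`sd Y ≤ n`. -/
theorem shapeDimLE_of_right_inverse (X Y : Type u)
    [TopologicalSpace X] [TopologicalSpace Y]
    (𝓧 𝓨 : InverseSystem.{u}) (pX : Expansion X 𝓧) (pY : Expansion Y 𝓨)
    (F : SysMor 𝓧 𝓨) (G : SysMor 𝓨 𝓧)
    (hinv : (ProMor.mk F).comp (ProMor.mk G) = ProMor.id 𝓨)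
    (n : ℕ) (hF : (ProMor.mk F).DimLE n) : ShapeDimLE Y n := by
  classical
  obtain ⟨F', hF'eq, hF'dim⟩ := hF
  set F₀ : SysMor 𝓧 𝓨 := Quot.out (ProMor.mk F) with hF₀
  set G₀ : SysMor 𝓨 𝓧 := Quot.out (ProMor.mk G) with hG₀
  have hIdEq : ProMor.mk (F₀.comp G₀) = ProMor.mk (SysMor.identity 𝓨) := hinv
  have hId : (F₀.comp G₀).Equiv (SysMor.identity 𝓨) := SysMor.equiv_of_mk_eq hIdEq
  have hFF : F'.Equiv F₀ := SysMor.equiv_of_mk_eq (by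
    rw [hF'eq, hF₀]
    exact (Quot.out_eq (ProMor.mk F)).symm)
  have hD : ∀ μ : 𝓨.Idx, Nonempty (BondFactor 𝓨 n μ) := by
    intro μ
    obtain ⟨t, h₁, h₂, hid⟩ := SysMor.Equiv.shift_eq hId μ
    obtain ⟨m, hm', hm₀, hfe⟩ := SysMor.Equiv.shift_eq hFF μ
    obtain ⟨lam, hlam, P, tpP, hPdim, u, v, hfact⟩ := hF'dim μ
    obtain ⟨lam', hmlam', hllam'⟩ := 𝓧.directed m lam
    have h4 : F₀.shift μ (hm₀.trans hmlam') = v.comp (u.comp (𝓧.bond hllam')) := by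
      have e := (hfe hmlam').symm
      have e' : F'.shift μ (hm'.trans hmlam') = v.comp (u.comp (𝓧.bond hllam')) := by
        rw [← SysMor.shift_comp _ _ hlam hllam', hfact, HMap.comp_assoc]
      rw [e, e']
    obtain ⟨r, hr₁, hr₂, hco⟩ := G₀.coherent' (hm₀.trans hmlam' : F₀.idxMap μ ≤ lam')
    obtain ⟨σ, hσt, hσr⟩ := 𝓨.directed t r
    refine ⟨⟨σ, h₂.trans hσt, P, hPdim,
      (u.comp (𝓧.bond hllam')).comp ((G₀.hmap lam').comp (𝓨.bond (hr₂.trans hσr))),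
      v, ?_⟩⟩
    calc v.comp ((u.comp (𝓧.bond hllam')).comp
          ((G₀.hmap lam').comp (𝓨.bond (hr₂.trans hσr))))
        = (v.comp (u.comp (𝓧.bond hllam'))).comp
            ((G₀.hmap lam').comp (𝓨.bond (hr₂.trans hσr))) :=
          (HMap.comp_assoc v (u.comp (𝓧.bond hllam')) _).symm
      _ = (F₀.shift μ (hm₀.trans hmlam')).comp
            ((G₀.hmap lam').comp (𝓨.bond (hr₂.trans hσr))) := by rw [h4]
      _ = (F₀.hmap μ).comp ((𝓧.bond (hm₀.trans hmlam')).comp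
            ((G₀.hmap lam').comp (𝓨.bond (hr₂.trans hσr)))) := by
          rw [SysMor.shift, HMap.comp_assoc]
      _ = (F₀.hmap μ).comp ((G₀.hmap (F₀.idxMap μ)).comp (𝓨.bond (hr₁.trans hσr))) := by
          rw [hco hσr]
      _ = ((F₀.hmap μ).comp (G₀.hmap (F₀.idxMap μ))).comp (𝓨.bond (hr₁.trans hσr)) := by
          rw [HMap.comp_assoc]
      _ = (F₀.comp G₀).shift μ (h₁.trans hσt) := rfl
      _ = (SysMor.identity 𝓨).shift μ (h₂.trans hσt) := hid hσt
      _ = (𝓨.bond (h₂.trans hσt) : HMap (𝓨.obj σ) (𝓨.obj μ)) := HMap.id_comp _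
  let D : ∀ μ : 𝓨.Idx, BondFactor 𝓨 n μ := fun μ => (hD μ).some
  exact ⟨telSystem D, telExpansion pY D, telSystem_dimLE D⟩

end ShapePaper
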